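/- Let G be a group with elements a_1, ..., a_{g-1}, u_1, ..., u_{g-1} satisfying the braid relations within each family, a_i u_j = u_j a_i for |i-j|>1, a_i u_{i+1} u_i = u_{i+1} u_i a_{i+1}, a_{i+1} u_i u_{i+1} = u_i u_{i+1} a_i, a_1 u_1 a_1 = u_1, u_2 a_1 a_2 u_1 = a_1 a_2, together with (u_{g-1} ⋯ u_1)(u_1 ⋯ u_{g-1}) = 1, (u_1 ⋯ u_{g-1})^g = 1, and the relation a_1 (a_2 ⋯ a_{g-1} u_{g-1} ⋯ u_2) a_1 = a_2 ⋯ a_{g-1} u_{g-1} ⋯ u_2. Set r = a_1 ⋯ a_{g-1} u_{g-1} ⋯ u_1. Then r a_i = a_i r and u_i r u_i = r for all i = 1, ..., g-1. -/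

import Mathlib

variable {G : Type*} [Group G]

/-- `prodAsc f m = f 1 * f 2 * ⋯ * f m` (empty product for `m = 0`). -/
def prodAsc (f : ℕ → G) (m : ℕ) : G :=
  ((List.range m).map (fun i => f (i + 1))).prod

/-- `prodDesc f m = f m * ⋯ * f 2 * f 1` (empty product for `m = 0`). -/
def prodDesc (f : ℕ → G) (m : ℕ) : G :=
  (((List.range m).reverse).map (fun i => f (i + 1))).prod

/-- The fundamental braid element: `Δ 0 = Δ 1 = 1`, `Δ (m+1) = (u 1 ⋯ u m) * Δ m`. -/
def braidDelta (u : ℕ → G) : ℕ → G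
  | 0 => 1
  | m + 1 => prodAsc u m * braidDelta u m

lemma prodAsc_zero (f : ℕ → G) : prodAsc f 0 = 1 := rfl

lemma prodAsc_succ (f : ℕ → G) (m : ℕ) :
    prodAsc f (m + 1) = prodAsc f m * f (m + 1) := by
  simp [prodAsc, List.range_succ]

lemma prodAsc_one (f : ℕ → G) : prodAsc f 1 = f 1 := by
  simp [prodAsc, List.range_succ]

lemma prodDesc_zero (f : ℕ → G) : prodDesc f 0 = 1 := rfl

lemma prodDesc_succ (f : ℕ → G) (m : ℕ) :
    prodDesc f (m + 1) = f (m + 1) * prodDesc f m := by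
  simp [prodDesc, List.range_succ]

lemma prodDesc_one (f : ℕ → G) : prodDesc f 1 = f 1 := by
  simp [prodDesc, List.range_succ]

def segAsc (f : ℕ → G) (k m : ℕ) : G := prodAsc (fun j => f (k + j)) m

def segDesc (f : ℕ → G) (k m : ℕ) : G := prodDesc (fun j => f (k + j)) m

lemma segAsc_zero (f : ℕ → G) (k : ℕ) : segAsc f k 0 = 1 := rfl

lemma segAsc_succ (f : ℕ → G) (k m : ℕ) :
    segAsc f k (m + 1) = segAsc f k m * f (k + m + 1) := by
  unfold segAsc
  rw [prodAsc_succ]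
  congr 2

lemma segDesc_zero (f : ℕ → G) (k : ℕ) : segDesc f k 0 = 1 := rfl

lemma segDesc_succ (f : ℕ → G) (k m : ℕ) :
    segDesc f k (m + 1) = f (k + m + 1) * segDesc f k m := by
  unfold segDesc
  rw [prodDesc_succ]
  congr 2

lemma prodAsc_add (f : ℕ → G) (k m : ℕ) :
    prodAsc f (k + m) = prodAsc f k * segAsc f k m := by
  induction m with
  | zero => simp [segAsc_zero]
  | succ m ih =>
      rw [← Nat.add_assoc, prodAsc_succ, ih, segAsc_succ, mul_assoc]

lemma prodDesc_add (f : ℕ → G) (k m : ℕ) :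
    prodDesc f (k + m) = segDesc f k m * prodDesc f k := by
  induction m with
  | zero => simp [segDesc_zero]
  | succ m ih =>
      rw [← Nat.add_assoc, prodDesc_succ, ih, segDesc_succ, mul_assoc]

lemma commute_prodAsc {x : G} (f : ℕ → G) (m : ℕ)
    (h : ∀ j, 1 ≤ j → j ≤ m → x * f j = f j * x) :
    x * prodAsc f m = prodAsc f m * x := by
  induction m with
  | zero => simp [prodAsc_zero]
  | succ m ih =>
      calc x * prodAsc f (m + 1) = (x * prodAsc f m) * f (m + 1) := by
            rw [prodAsc_succ, mul_assoc]
        _ = prodAsc f m * (x * f (m + 1)) := by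
            rw [ih (fun j h1 h2 => h j h1 (by omega)), mul_assoc]
        _ = prodAsc f (m + 1) * x := by
            rw [h (m + 1) (by omega) (by omega), prodAsc_succ, mul_assoc]

lemma commute_segAsc {x : G} (f : ℕ → G) (k m : ℕ)
    (h : ∀ j, k + 1 ≤ j → j ≤ k + m → x * f j = f j * x) :
    x * segAsc f k m = segAsc f k m * x :=
  commute_prodAsc _ _ (fun j h1 h2 => h (k + j) (by omega) (by omega))

lemma commute_prodDesc {x : G} (f : ℕ → G) (m : ℕ)
    (h : ∀ j, 1 ≤ j → j ≤ m → x * f j = f j * x) :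
    x * prodDesc f m = prodDesc f m * x := by
  induction m with
  | zero => simp [prodDesc_zero]
  | succ m ih =>
      calc x * prodDesc f (m + 1) = (x * f (m + 1)) * prodDesc f m := by
            rw [prodDesc_succ, mul_assoc]
        _ = f (m + 1) * (x * prodDesc f m) := by
            rw [h (m + 1) (by omega) (by omega), mul_assoc]
        _ = prodDesc f (m + 1) * x := by
            rw [ih (fun j h1 h2 => h j h1 (by omega)), prodDesc_succ, mul_assoc]

lemma commute_segDesc {x : G} (f : ℕ → G) (k m : ℕ)
    (h : ∀ j, k + 1 ≤ j → j ≤ k + m → x * f j = f j * x) :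
    x * segDesc f k m = segDesc f k m * x :=
  commute_prodDesc _ _ (fun j h1 h2 => h (k + j) (by omega) (by omega))

lemma shift_asc_braid (b : ℕ → G) (n : ℕ)
    (h1 : ∀ i j, 1 ≤ i → i + 2 ≤ j → j ≤ n → b i * b j = b j * b i)
    (h2 : ∀ i, 1 ≤ i → i + 1 ≤ n → b i * b (i + 1) * b i = b (i + 1) * b i * b (i + 1)) :
    ∀ i, 1 ≤ i → i + 1 ≤ n → prodAsc b n * b i = b (i + 1) * prodAsc b n := by
  intro i hi hin
  obtain ⟨j, rfl⟩ : ∃ j, i = j + 1 := ⟨i - 1, by omega⟩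
  obtain ⟨m, rfl⟩ : ∃ m, n = (j + 2) + m := ⟨n - (j + 2), by omega⟩
  have hsplit : prodAsc b (j + 2 + m) =
      prodAsc b j * b (j + 1) * b (j + 2) * segAsc b (j + 2) m := by
    rw [prodAsc_add, prodAsc_succ, prodAsc_succ]
  have hc1 : b (j + 1) * segAsc b (j + 2) m = segAsc b (j + 2) m * b (j + 1) :=
    commute_segAsc _ _ _ (fun k hk1 hk2 => h1 (j + 1) k (by omega) (by omega) (by omega))
  have hc2 : b (j + 2) * prodAsc b j = prodAsc b j * b (j + 2) :=
    commute_prodAsc _ _ (fun k hk1 hk2 => (h1 k (j + 2) (by omega) (by omega) (by omega)).symm)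
  calc prodAsc b (j + 2 + m) * b (j + 1)
      = prodAsc b j * b (j + 1) * b (j + 2) * segAsc b (j + 2) m * b (j + 1) := by
        rw [hsplit]
    _ = prodAsc b j * b (j + 1) * b (j + 2) * (segAsc b (j + 2) m * b (j + 1)) := by
        simp only [mul_assoc]
    _ = prodAsc b j * b (j + 1) * b (j + 2) * (b (j + 1) * segAsc b (j + 2) m) := by
        rw [← hc1]
    _ = prodAsc b j * (b (j + 1) * b (j + 2) * b (j + 1)) * segAsc b (j + 2) m := by
        simp only [mul_assoc]
    _ = prodAsc b j * (b (j + 2) * b (j + 1) * b (j + 2)) * segAsc b (j + 2) m := by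
        rw [h2 (j + 1) (by omega) (by omega)]
    _ = prodAsc b j * b (j + 2) * (b (j + 1) * (b (j + 2) * segAsc b (j + 2) m)) := by
        simp only [mul_assoc]
    _ = b (j + 2) * prodAsc b j * (b (j + 1) * (b (j + 2) * segAsc b (j + 2) m)) := by
        rw [← hc2]
    _ = b (j + 2) * (prodAsc b j * b (j + 1) * b (j + 2) * segAsc b (j + 2) m) := by
        simp only [mul_assoc]
    _ = b (j + 2) * prodAsc b (j + 2 + m) := by rw [hsplit]

lemma shift_desc_braid (b : ℕ → G) (n : ℕ)
    (h1 : ∀ i j, 1 ≤ i → i + 2 ≤ j → j ≤ n → b i * b j = b j * b i)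
    (h2 : ∀ i, 1 ≤ i → i + 1 ≤ n → b i * b (i + 1) * b i = b (i + 1) * b i * b (i + 1)) :
    ∀ i, 1 ≤ i → i + 1 ≤ n → b i * prodDesc b n = prodDesc b n * b (i + 1) := by
  intro i hi hin
  obtain ⟨j, rfl⟩ : ∃ j, i = j + 1 := ⟨i - 1, by omega⟩
  obtain ⟨m, rfl⟩ : ∃ m, n = (j + 2) + m := ⟨n - (j + 2), by omega⟩
  have hsplit : prodDesc b (j + 2 + m) =
      segDesc b (j + 2) m * b (j + 2) * b (j + 1) * prodDesc b j := by
    rw [prodDesc_add, prodDesc_succ, prodDesc_succ]; simp only [mul_assoc]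
  have hc1 : b (j + 1) * segDesc b (j + 2) m = segDesc b (j + 2) m * b (j + 1) :=
    commute_segDesc _ _ _ (fun k hk1 hk2 => h1 (j + 1) k (by omega) (by omega) (by omega))
  have hc2 : b (j + 2) * prodDesc b j = prodDesc b j * b (j + 2) :=
    commute_prodDesc _ _ (fun k hk1 hk2 => (h1 k (j + 2) (by omega) (by omega) (by omega)).symm)
  calc b (j + 1) * prodDesc b (j + 2 + m)
      = b (j + 1) * (segDesc b (j + 2) m * b (j + 2) * b (j + 1) * prodDesc b j) := by
        rw [hsplit]
    _ = b (j + 1) * segDesc b (j + 2) m * b (j + 2) * b (j + 1) * prodDesc b j := by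
        simp only [mul_assoc]
    _ = segDesc b (j + 2) m * b (j + 1) * b (j + 2) * b (j + 1) * prodDesc b j := by
        rw [hc1]
    _ = segDesc b (j + 2) m * (b (j + 1) * b (j + 2) * b (j + 1)) * prodDesc b j := by
        simp only [mul_assoc]
    _ = segDesc b (j + 2) m * (b (j + 2) * b (j + 1) * b (j + 2)) * prodDesc b j := by
        rw [h2 (j + 1) (by omega) (by omega)]
    _ = segDesc b (j + 2) m * b (j + 2) * b (j + 1) * (b (j + 2) * prodDesc b j) := by
        simp only [mul_assoc]
    _ = segDesc b (j + 2) m * b (j + 2) * b (j + 1) * (prodDesc b j * b (j + 2)) := by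
        rw [hc2]
    _ = segDesc b (j + 2) m * b (j + 2) * b (j + 1) * prodDesc b j * b (j + 2) := by
        simp only [mul_assoc]
    _ = prodDesc b (j + 2 + m) * b (j + 2) := by rw [hsplit]

lemma shift_desc_ua (a u : ℕ → G) (n : ℕ)
    (hC1 : ∀ i j, 1 ≤ i → i ≤ n → 1 ≤ j → j ≤ n → (i + 2 ≤ j ∨ j + 2 ≤ i) →
      a i * u j = u j * a i)
    (hC2 : ∀ i, 1 ≤ i → i + 1 ≤ n → a i * u (i + 1) * u i = u (i + 1) * u i * a (i + 1)) :
    ∀ i, 1 ≤ i → i + 1 ≤ n → prodDesc u n * a (i + 1) = a i * prodDesc u n := by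
  intro i hi hin
  obtain ⟨j, rfl⟩ : ∃ j, i = j + 1 := ⟨i - 1, by omega⟩
  obtain ⟨m, rfl⟩ : ∃ m, n = (j + 2) + m := ⟨n - (j + 2), by omega⟩
  have hsplit : prodDesc u (j + 2 + m) =
      segDesc u (j + 2) m * u (j + 2) * u (j + 1) * prodDesc u j := by
    rw [prodDesc_add, prodDesc_succ, prodDesc_succ]; simp only [mul_assoc]
  have hc1 : a (j + 1) * segDesc u (j + 2) m = segDesc u (j + 2) m * a (j + 1) :=
    commute_segDesc _ _ _ (fun k hk1 hk2 =>
      hC1 (j + 1) k (by omega) (by omega) (by omega) (by omega) (by omega))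
  have hc2 : a (j + 2) * prodDesc u j = prodDesc u j * a (j + 2) :=
    commute_prodDesc _ _ (fun k hk1 hk2 =>
      hC1 (j + 2) k (by omega) (by omega) (by omega) (by omega) (by omega))
  calc prodDesc u (j + 2 + m) * a (j + 2)
      = segDesc u (j + 2) m * u (j + 2) * u (j + 1) * prodDesc u j * a (j + 2) := by
        rw [hsplit]
    _ = segDesc u (j + 2) m * u (j + 2) * u (j + 1) * (prodDesc u j * a (j + 2)) := by
        simp only [mul_assoc]
    _ = segDesc u (j + 2) m * u (j + 2) * u (j + 1) * (a (j + 2) * prodDesc u j) := by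
        rw [← hc2]
    _ = segDesc u (j + 2) m * (u (j + 2) * u (j + 1) * a (j + 2)) * prodDesc u j := by
        simp only [mul_assoc]
    _ = segDesc u (j + 2) m * (a (j + 1) * u (j + 2) * u (j + 1)) * prodDesc u j := by
        rw [← hC2 (j + 1) (by omega) (by omega)]
    _ = segDesc u (j + 2) m * a (j + 1) * u (j + 2) * u (j + 1) * prodDesc u j := by
        simp only [mul_assoc]
    _ = a (j + 1) * segDesc u (j + 2) m * u (j + 2) * u (j + 1) * prodDesc u j := by
        rw [← hc1]
    _ = a (j + 1) * (segDesc u (j + 2) m * u (j + 2) * u (j + 1) * prodDesc u j) := by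
        simp only [mul_assoc]
    _ = a (j + 1) * prodDesc u (j + 2 + m) := by rw [hsplit]

lemma shift_asc_ua (a u : ℕ → G) (n : ℕ)
    (hC1 : ∀ i j, 1 ≤ i → i ≤ n → 1 ≤ j → j ≤ n → (i + 2 ≤ j ∨ j + 2 ≤ i) →
      a i * u j = u j * a i)
    (hC3 : ∀ i, 1 ≤ i → i + 1 ≤ n → a (i + 1) * u i * u (i + 1) = u i * u (i + 1) * a i) :
    ∀ i, 1 ≤ i → i + 1 ≤ n → prodAsc u n * a i = a (i + 1) * prodAsc u n := by
  intro i hi hin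
  obtain ⟨j, rfl⟩ : ∃ j, i = j + 1 := ⟨i - 1, by omega⟩
  obtain ⟨m, rfl⟩ : ∃ m, n = (j + 2) + m := ⟨n - (j + 2), by omega⟩
  have hsplit : prodAsc u (j + 2 + m) =
      prodAsc u j * u (j + 1) * u (j + 2) * segAsc u (j + 2) m := by
    rw [prodAsc_add, prodAsc_succ, prodAsc_succ]
  have hc1 : a (j + 2) * prodAsc u j = prodAsc u j * a (j + 2) :=
    commute_prodAsc _ _ (fun k hk1 hk2 =>
      hC1 (j + 2) k (by omega) (by omega) (by omega) (by omega) (by omega))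
  have hc2 : a (j + 1) * segAsc u (j + 2) m = segAsc u (j + 2) m * a (j + 1) :=
    commute_segAsc _ _ _ (fun k hk1 hk2 =>
      hC1 (j + 1) k (by omega) (by omega) (by omega) (by omega) (by omega))
  have key : a (j + 2) * prodAsc u (j + 2 + m) = prodAsc u (j + 2 + m) * a (j + 1) := by
    calc a (j + 2) * prodAsc u (j + 2 + m)
        = a (j + 2) * (prodAsc u j * u (j + 1) * u (j + 2) * segAsc u (j + 2) m) := by
          rw [hsplit]
      _ = a (j + 2) * prodAsc u j * u (j + 1) * u (j + 2) * segAsc u (j + 2) m := by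
          simp only [mul_assoc]
      _ = prodAsc u j * a (j + 2) * u (j + 1) * u (j + 2) * segAsc u (j + 2) m := by
          rw [hc1]
      _ = prodAsc u j * (a (j + 2) * u (j + 1) * u (j + 2)) * segAsc u (j + 2) m := by
          simp only [mul_assoc]
      _ = prodAsc u j * (u (j + 1) * u (j + 2) * a (j + 1)) * segAsc u (j + 2) m := by
          rw [hC3 (j + 1) (by omega) (by omega)]
      _ = prodAsc u j * u (j + 1) * u (j + 2) * (a (j + 1) * segAsc u (j + 2) m) := by
          simp only [mul_assoc]
      _ = prodAsc u j * u (j + 1) * u (j + 2) * (segAsc u (j + 2) m * a (j + 1)) := by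
          rw [hc2]
      _ = prodAsc u j * u (j + 1) * u (j + 2) * segAsc u (j + 2) m * a (j + 1) := by
          simp only [mul_assoc]
      _ = prodAsc u (j + 2 + m) * a (j + 1) := by rw [hsplit]
  exact key.symm

lemma gen_C5 (a u : ℕ → G) (n : ℕ)
    (sA : ∀ i, 1 ≤ i → i + 1 ≤ n → prodAsc u n * a i = a (i + 1) * prodAsc u n)
    (sU : ∀ i, 1 ≤ i → i + 1 ≤ n → prodAsc u n * u i = u (i + 1) * prodAsc u n)
    (hC5 : u 2 * a 1 * a 2 * u 1 = a 1 * a 2) :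
    ∀ k, k + 2 ≤ n → u (k + 2) * a (k + 1) * a (k + 2) * u (k + 1) = a (k + 1) * a (k + 2) := by
  intro k
  induction k with
  | zero => intro _; exact hC5
  | succ k ih =>
      intro h
      have ihh := ih (by omega)
      apply mul_right_cancel (b := prodAsc u n)
      have h1 := sU (k + 1) (by omega) (by omega)
      have h2 := sU (k + 2) (by omega) (by omega)
      have h3 := sA (k + 1) (by omega) (by omega)
      have h4 := sA (k + 2) (by omega) (by omega)
      calc u (k + 1 + 2) * a (k + 1 + 1) * a (k + 1 + 2) * u (k + 1 + 1) * prodAsc u n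
          = u (k + 3) * a (k + 2) * a (k + 3) * (u (k + 2) * prodAsc u n) := by
            simp only [mul_assoc]
        _ = u (k + 3) * a (k + 2) * a (k + 3) * (prodAsc u n * u (k + 1)) := by
            rw [← h1]
        _ = u (k + 3) * a (k + 2) * (a (k + 3) * prodAsc u n) * u (k + 1) := by
            simp only [mul_assoc]
        _ = u (k + 3) * a (k + 2) * (prodAsc u n * a (k + 2)) * u (k + 1) := by
            rw [← h4]
        _ = u (k + 3) * (a (k + 2) * prodAsc u n) * (a (k + 2) * u (k + 1)) := by
            simp only [mul_assoc]
        _ = u (k + 3) * (prodAsc u n * a (k + 1)) * (a (k + 2) * u (k + 1)) := by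
            rw [← h3]
        _ = (u (k + 3) * prodAsc u n) * (a (k + 1) * (a (k + 2) * u (k + 1))) := by
            simp only [mul_assoc]
        _ = (prodAsc u n * u (k + 2)) * (a (k + 1) * (a (k + 2) * u (k + 1))) := by
            rw [← h2]
        _ = prodAsc u n * (u (k + 2) * a (k + 1) * a (k + 2) * u (k + 1)) := by
            simp only [mul_assoc]
        _ = prodAsc u n * (a (k + 1) * a (k + 2)) := by rw [ihh]
        _ = (prodAsc u n * a (k + 1)) * a (k + 2) := by simp only [mul_assoc]
        _ = (a (k + 2) * prodAsc u n) * a (k + 2) := by rw [h3]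
        _ = a (k + 2) * (prodAsc u n * a (k + 2)) := by simp only [mul_assoc]
        _ = a (k + 2) * (a (k + 3) * prodAsc u n) := by rw [h4]
        _ = a (k + 1 + 1) * a (k + 1 + 2) * prodAsc u n := by simp only [mul_assoc]

lemma shift_pow (a u : ℕ → G) (n : ℕ)
    (sA : ∀ i, 1 ≤ i → i + 1 ≤ n → prodAsc u n * a i = a (i + 1) * prodAsc u n) :
    ∀ k, k + 1 ≤ n → (prodAsc u n) ^ k * a 1 = a (k + 1) * (prodAsc u n) ^ k := by
  intro k
  induction k with
  | zero => intro _; simp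
  | succ k ih =>
      intro h
      calc (prodAsc u n) ^ (k + 1) * a 1
          = prodAsc u n * ((prodAsc u n) ^ k * a 1) := by
            rw [pow_succ']; simp only [mul_assoc]
        _ = prodAsc u n * (a (k + 1) * (prodAsc u n) ^ k) := by rw [ih (by omega)]
        _ = (prodAsc u n * a (k + 1)) * (prodAsc u n) ^ k := by simp only [mul_assoc]
        _ = (a (k + 2) * prodAsc u n) * (prodAsc u n) ^ k := by
            rw [sA (k + 1) (by omega) (by omega)]
        _ = a (k + 1 + 1) * (prodAsc u n) ^ (k + 1) := by
            rw [pow_succ']; simp only [mul_assoc]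

/-- relations (E3a) and (E4a): r a_i = a_i r and u_i r u_i = r for all
1 ≤ i ≤ g-1, where r = a_1 ⋯ a_{g-1} u_{g-1} ⋯ u_1, in the presence of the closed-surface
relations (B3), (B4a) and (D). -/
theorem rel_E3a_E4a (g : ℕ) (a u : ℕ → G)
    (ha1 : ∀ i j, 1 ≤ i → i + 2 ≤ j → j ≤ g - 1 → a i * a j = a j * a i)
    (ha2 : ∀ i, 1 ≤ i → i + 1 ≤ g - 1 → a i * a (i + 1) * a i = a (i + 1) * a i * a (i + 1))
    (hu1 : ∀ i j, 1 ≤ i → i + 2 ≤ j → j ≤ g - 1 → u i * u j = u j * u i)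
    (hu2 : ∀ i, 1 ≤ i → i + 1 ≤ g - 1 → u i * u (i + 1) * u i = u (i + 1) * u i * u (i + 1))
    (hC1 : ∀ i j, 1 ≤ i → i ≤ g - 1 → 1 ≤ j → j ≤ g - 1 → (i + 2 ≤ j ∨ j + 2 ≤ i) →
      a i * u j = u j * a i)
    (hC2 : ∀ i, 1 ≤ i → i ≤ g - 2 → a i * u (i + 1) * u i = u (i + 1) * u i * a (i + 1))
    (hC3 : ∀ i, 1 ≤ i → i ≤ g - 2 → a (i + 1) * u i * u (i + 1) = u i * u (i + 1) * a i)
    (hC4 : a 1 * u 1 * a 1 = u 1)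
    (hC5 : u 2 * a 1 * a 2 * u 1 = a 1 * a 2)
(hB4a : prodDesc u (g - 1) * prodAsc u (g - 1) = 1)
    (hB3 : (prodAsc u (g - 1)) ^ g = 1)
    (hD : a 1 * (((List.range (g - 2)).map (fun i => a (i + 2))).prod *
            (((List.range (g - 2)).reverse).map (fun i => u (i + 2))).prod) * a 1 =
          ((List.range (g - 2)).map (fun i => a (i + 2))).prod *
            (((List.range (g - 2)).reverse).map (fun i => u (i + 2))).prod)
    :
    ∀ i, 1 ≤ i → i ≤ g - 1 →
      (prodAsc a (g - 1) * prodDesc u (g - 1)) * a i =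
        a i * (prodAsc a (g - 1) * prodDesc u (g - 1)) ∧
      u i * (prodAsc a (g - 1) * prodDesc u (g - 1)) * u i =
        prodAsc a (g - 1) * prodDesc u (g - 1) := by
  intro i hi1 hi2
  rcases Nat.eq_zero_or_pos g with rfl | hgpos
  · exact absurd hi2 (by omega)
  obtain ⟨n, rfl⟩ : ∃ n, g = n + 1 := ⟨g - 1, by omega⟩
  simp only [Nat.add_sub_cancel] at hi2 ha1 ha2 hu1 hu2 hC1 hB4a hB3 ⊢
  rw [show n + 1 - 2 = n - 1 from by omega] at hC2 hC3 hD
  rcases Nat.eq_zero_or_pos n with rfl | hnpos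
  · exact absurd hi2 (by omega)
  rcases eq_or_lt_of_le (show 1 ≤ n from hnpos) with hn1 | hn2
  · -- case n = 1 (g = 2)
    obtain rfl : n = 1 := hn1.symm
    obtain rfl : i = 1 := by omega
    simp only [show (1 : ℕ) - 1 = 0 from rfl, List.range_zero, List.map_nil,
      List.reverse_nil, List.prod_nil, mul_one, one_mul] at hD
    -- hD : a 1 * a 1 = 1
    rw [prodAsc_one, prodDesc_one] at hB4a ⊢
    -- hB4a : u 1 * u 1 = 1
    have hcomm : u 1 * a 1 = a 1 * u 1 := by
      calc u 1 * a 1 = (a 1 * a 1) * (u 1 * a 1) := by rw [hD, one_mul]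
        _ = a 1 * (a 1 * u 1 * a 1) := by simp only [mul_assoc]
        _ = a 1 * u 1 := by rw [hC4]
    constructor
    · calc a 1 * u 1 * a 1 = u 1 := hC4
        _ = (a 1 * a 1) * u 1 := by rw [hD, one_mul]
        _ = a 1 * (a 1 * u 1) := by simp only [mul_assoc]
    · calc u 1 * (a 1 * u 1) * u 1 = (u 1 * a 1) * (u 1 * u 1) := by simp only [mul_assoc]
        _ = (a 1 * u 1) * (u 1 * u 1) := by rw [hcomm]
        _ = (a 1 * u 1) * 1 := by rw [hB4a]
        _ = a 1 * u 1 := by rw [mul_one]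
  -- main case : n ≥ 2
  have hn : 2 ≤ n := hn2
  have hC2' : ∀ i, 1 ≤ i → i + 1 ≤ n → a i * u (i + 1) * u i = u (i + 1) * u i * a (i + 1) :=
    fun i h1 h2 => hC2 i h1 (by omega)
  have hC3' : ∀ i, 1 ≤ i → i + 1 ≤ n → a (i + 1) * u i * u (i + 1) = u i * u (i + 1) * a i :=
    fun i h1 h2 => hC3 i h1 (by omega)
  have sA := shift_asc_braid a n ha1 ha2
  have sVu := shift_asc_braid u n hu1 hu2
  have sUu := shift_desc_braid u n hu1 hu2
  have sUa := shift_desc_ua a u n hC1 hC2'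
  have sVa := shift_asc_ua a u n hC1 hC3'
  have g5 := gen_C5 a u n sVa sVu hC5
  have hpw := shift_pow a u n sVa
  have hUinv : prodDesc u n = (prodAsc u n)⁻¹ := eq_inv_of_mul_eq_one_left hB4a
  -- reformulate hD
  have hseg_a : ((List.range (n - 1)).map (fun i => a (i + 2))).prod = segAsc a 1 (n - 1) := by
    unfold segAsc prodAsc
    congr 1
    apply List.map_congr_left
    intro x _
    congr 1
    omega
  have hseg_u : (((List.range (n - 1)).reverse).map (fun i => u (i + 2))).prod
      = segDesc u 1 (n - 1) := by
    unfold segDesc prodDesc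
    congr 1
    apply List.map_congr_left
    intro x _
    congr 1
    omega
  have hD' : a 1 * (segAsc a 1 (n - 1) * segDesc u 1 (n - 1)) * a 1
      = segAsc a 1 (n - 1) * segDesc u 1 (n - 1) := by
    rw [← hseg_a, ← hseg_u]; exact hD
  have hUsplit : prodDesc u n = segDesc u 1 (n - 1) * u 1 := by
    have h := prodDesc_add u 1 (n - 1)
    rw [prodDesc_one] at h
    rw [show 1 + (n - 1) = n from by omega] at h
    exact h
  have hASplit : prodAsc a n = a 1 * segAsc a 1 (n - 1) := by
    have h := prodAsc_add a 1 (n - 1)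
    rw [prodAsc_one] at h
    rw [show 1 + (n - 1) = n from by omega] at h
    exact h
  have hAP : prodAsc a n = prodAsc a (n - 1) * a n := by
    have h := prodAsc_succ a (n - 1)
    rw [show n - 1 + 1 = n from by omega] at h
    exact h
  have hu1a1 : u 1 * a 1 = (a 1)⁻¹ * u 1 := by
    calc u 1 * a 1 = (a 1)⁻¹ * (a 1 * u 1 * a 1) := by group
      _ = (a 1)⁻¹ * u 1 := by rw [hC4]
  have hs : a 1 * (segAsc a 1 (n - 1) * segDesc u 1 (n - 1))
      = (segAsc a 1 (n - 1) * segDesc u 1 (n - 1)) * (a 1)⁻¹ := by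
    calc a 1 * (segAsc a 1 (n - 1) * segDesc u 1 (n - 1))
        = (a 1 * (segAsc a 1 (n - 1) * segDesc u 1 (n - 1)) * a 1) * (a 1)⁻¹ := by group
      _ = (segAsc a 1 (n - 1) * segDesc u 1 (n - 1)) * (a 1)⁻¹ := by rw [hD']
  have ht : (segAsc a 1 (n - 1) * prodDesc u n) * a 1
      = a 1 * (segAsc a 1 (n - 1) * prodDesc u n) := by
    calc (segAsc a 1 (n - 1) * prodDesc u n) * a 1
        = (segAsc a 1 (n - 1) * (segDesc u 1 (n - 1) * u 1)) * a 1 := by rw [hUsplit]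
      _ = (segAsc a 1 (n - 1) * segDesc u 1 (n - 1)) * (u 1 * a 1) := by
          simp only [mul_assoc]
      _ = (segAsc a 1 (n - 1) * segDesc u 1 (n - 1)) * ((a 1)⁻¹ * u 1) := by rw [hu1a1]
      _ = (segAsc a 1 (n - 1) * segDesc u 1 (n - 1)) * (a 1)⁻¹ * u 1 := by
          simp only [mul_assoc]
      _ = a 1 * (segAsc a 1 (n - 1) * segDesc u 1 (n - 1)) * u 1 := by rw [← hs]
      _ = a 1 * (segAsc a 1 (n - 1) * (segDesc u 1 (n - 1) * u 1)) := by
          simp only [mul_assoc]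
      _ = a 1 * (segAsc a 1 (n - 1) * prodDesc u n) := by rw [hUsplit]
  -- A' * V = V * P
  have hA'V : segAsc a 1 (n - 1) * prodAsc u n = prodAsc u n * prodAsc a (n - 1) := by
    have key : ∀ m, m + 1 ≤ n → segAsc a 1 m * prodAsc u n = prodAsc u n * prodAsc a m := by
      intro m
      induction m with
      | zero => intro _; simp [segAsc_zero, prodAsc_zero]
      | succ m ih =>
          intro h
          have hs1 : prodAsc u n * a (m + 1) = a (m + 2) * prodAsc u n :=
            sVa (m + 1) (by omega) (by omega)
          calc segAsc a 1 (m + 1) * prodAsc u n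
              = (segAsc a 1 m * a (1 + m + 1)) * prodAsc u n := by rw [segAsc_succ]
            _ = (segAsc a 1 m * a (m + 2)) * prodAsc u n := by
                rw [show 1 + m + 1 = m + 2 from by omega]
            _ = segAsc a 1 m * (a (m + 2) * prodAsc u n) := by simp only [mul_assoc]
            _ = segAsc a 1 m * (prodAsc u n * a (m + 1)) := by rw [← hs1]
            _ = (segAsc a 1 m * prodAsc u n) * a (m + 1) := by simp only [mul_assoc]
            _ = (prodAsc u n * prodAsc a m) * a (m + 1) := by rw [ih (by omega)]
            _ = prodAsc u n * (prodAsc a m * a (m + 1)) := by simp only [mul_assoc]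
            _ = prodAsc u n * prodAsc a (m + 1) := by rw [prodAsc_succ]
    exact key (n - 1) (by omega)
  -- V^2 * a n = a 1 * V^2 (uses B3)
  have hV2an : prodAsc u n * prodAsc u n * a n = a 1 * (prodAsc u n * prodAsc u n) := by
    have h1 : (prodAsc u n) ^ (n - 1) * a 1 = a n * (prodAsc u n) ^ (n - 1) := by
      have h := hpw (n - 1) (by omega)
      rw [show n - 1 + 1 = n from by omega] at h
      exact h
    have h2 : prodAsc u n * prodAsc u n * (prodAsc u n) ^ (n - 1) = 1 := by
      calc prodAsc u n * prodAsc u n * (prodAsc u n) ^ (n - 1)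
          = (prodAsc u n) ^ (2 + (n - 1)) := by rw [pow_add]; group
        _ = (prodAsc u n) ^ (n + 1) := by rw [show 2 + (n - 1) = n + 1 from by omega]
        _ = 1 := hB3
    apply mul_right_cancel (b := (prodAsc u n) ^ (n - 1))
    calc prodAsc u n * prodAsc u n * a n * (prodAsc u n) ^ (n - 1)
        = prodAsc u n * prodAsc u n * (a n * (prodAsc u n) ^ (n - 1)) := by
          simp only [mul_assoc]
      _ = prodAsc u n * prodAsc u n * ((prodAsc u n) ^ (n - 1) * a 1) := by rw [← h1]
      _ = (prodAsc u n * prodAsc u n * (prodAsc u n) ^ (n - 1)) * a 1 := by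
          simp only [mul_assoc]
      _ = a 1 := by rw [h2, one_mul]
      _ = a 1 * (prodAsc u n * prodAsc u n * (prodAsc u n) ^ (n - 1)) := by
          rw [h2, mul_one]
      _ = a 1 * (prodAsc u n * prodAsc u n) * (prodAsc u n) ^ (n - 1) := by
          simp only [mul_assoc]
  -- V⁻¹ * V⁻¹ * a 1 * V = a n * V⁻¹
  have e4 : (prodAsc u n)⁻¹ * (prodAsc u n)⁻¹ * a 1 * prodAsc u n
      = a n * (prodAsc u n)⁻¹ := by
    apply mul_left_cancel (a := prodAsc u n * prodAsc u n)
    calc prodAsc u n * prodAsc u n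
          * ((prodAsc u n)⁻¹ * (prodAsc u n)⁻¹ * a 1 * prodAsc u n)
        = a 1 * (prodAsc u n * prodAsc u n) * (prodAsc u n)⁻¹ := by group
      _ = (prodAsc u n * prodAsc u n * a n) * (prodAsc u n)⁻¹ := by rw [← hV2an]
      _ = prodAsc u n * prodAsc u n * (a n * (prodAsc u n)⁻¹) := by simp only [mul_assoc]
  -- the central fact : A * V = V * A
  have hAV : prodAsc a n * prodAsc u n = prodAsc u n * prodAsc a n := by
    have ht' : (segAsc a 1 (n - 1) * (prodAsc u n)⁻¹) * a 1
        = a 1 * (segAsc a 1 (n - 1) * (prodAsc u n)⁻¹) := by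
      rw [← hUinv]; exact ht
    have e1 : segAsc a 1 (n - 1) = prodAsc u n * prodAsc a (n - 1) * (prodAsc u n)⁻¹ := by
      calc segAsc a 1 (n - 1)
          = segAsc a 1 (n - 1) * prodAsc u n * (prodAsc u n)⁻¹ := by group
        _ = prodAsc u n * prodAsc a (n - 1) * (prodAsc u n)⁻¹ := by rw [hA'V]
    have e3 : a 1 * segAsc a 1 (n - 1)
        = segAsc a 1 (n - 1) * (prodAsc u n)⁻¹ * a 1 * prodAsc u n := by
      calc a 1 * segAsc a 1 (n - 1)
          = a 1 * (segAsc a 1 (n - 1) * (prodAsc u n)⁻¹) * prodAsc u n := by group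
        _ = ((segAsc a 1 (n - 1) * (prodAsc u n)⁻¹) * a 1) * prodAsc u n := by rw [← ht']
        _ = segAsc a 1 (n - 1) * (prodAsc u n)⁻¹ * a 1 * prodAsc u n := by
            simp only [mul_assoc]
    have hkey : prodAsc u n * prodAsc a n
        = prodAsc u n * (prodAsc u n * prodAsc a n * (prodAsc u n)⁻¹) := by
      calc prodAsc u n * prodAsc a n
          = prodAsc u n * (a 1 * segAsc a 1 (n - 1)) := by rw [hASplit]
        _ = prodAsc u n
            * (segAsc a 1 (n - 1) * (prodAsc u n)⁻¹ * a 1 * prodAsc u n) := by rw [e3]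
        _ = prodAsc u n
            * (prodAsc u n * prodAsc a (n - 1) * (prodAsc u n)⁻¹ * (prodAsc u n)⁻¹
                * a 1 * prodAsc u n) := by rw [e1]
        _ = prodAsc u n
            * (prodAsc u n * prodAsc a (n - 1)
                * ((prodAsc u n)⁻¹ * (prodAsc u n)⁻¹ * a 1 * prodAsc u n)) := by
            simp only [mul_assoc]
        _ = prodAsc u n
            * (prodAsc u n * prodAsc a (n - 1) * (a n * (prodAsc u n)⁻¹)) := by rw [e4]
        _ = prodAsc u n
            * (prodAsc u n * (prodAsc a (n - 1) * a n) * (prodAsc u n)⁻¹) := by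
            simp only [mul_assoc]
        _ = prodAsc u n * (prodAsc u n * prodAsc a n * (prodAsc u n)⁻¹) := by rw [← hAP]
    apply mul_left_cancel (a := prodAsc u n)
    have hassoc : prodAsc u n * (prodAsc a n * prodAsc u n)
        = (prodAsc u n * prodAsc a n) * prodAsc u n := by simp only [mul_assoc]
    rw [hassoc]
    nth_rewrite 1 [hkey]
    group
  -- E3 : r commutes with every a i
  have E3 : ∀ i, 1 ≤ i → i ≤ n →
      (prodAsc a n * prodDesc u n) * a i = a i * (prodAsc a n * prodDesc u n) := by
    intro i h1 h2
    rcases eq_or_lt_of_le h1 with he | hgt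
    · obtain rfl : i = 1 := he.symm
      calc (prodAsc a n * prodDesc u n) * a 1
          = (a 1 * segAsc a 1 (n - 1)) * prodDesc u n * a 1 := by rw [hASplit]
        _ = a 1 * (segAsc a 1 (n - 1) * prodDesc u n * a 1) := by simp only [mul_assoc]
        _ = a 1 * (a 1 * (segAsc a 1 (n - 1) * prodDesc u n)) := by rw [ht]
        _ = a 1 * ((a 1 * segAsc a 1 (n - 1)) * prodDesc u n) := by simp only [mul_assoc]
        _ = a 1 * (prodAsc a n * prodDesc u n) := by rw [← hASplit]
    · obtain ⟨j, rfl⟩ : ∃ j, i = j + 1 := ⟨i - 1, by omega⟩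
      have h3 : prodDesc u n * a (j + 1) = a j * prodDesc u n := sUa j (by omega) (by omega)
      have h4 : prodAsc a n * a j = a (j + 1) * prodAsc a n := sA j (by omega) (by omega)
      calc (prodAsc a n * prodDesc u n) * a (j + 1)
          = prodAsc a n * (prodDesc u n * a (j + 1)) := by simp only [mul_assoc]
        _ = prodAsc a n * (a j * prodDesc u n) := by rw [h3]
        _ = (prodAsc a n * a j) * prodDesc u n := by simp only [mul_assoc]
        _ = (a (j + 1) * prodAsc a n) * prodDesc u n := by rw [h4]
        _ = a (j + 1) * (prodAsc a n * prodDesc u n) := by simp only [mul_assoc]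
  -- E4 for indices >= 2
  have E4' : ∀ k, k + 2 ≤ n →
      u (k + 2) * (prodAsc a n * prodDesc u n) * u (k + 2) = prodAsc a n * prodDesc u n := by
    intro k hk
    obtain ⟨m, hm⟩ : ∃ m, n = (k + 2) + m := ⟨n - (k + 2), by omega⟩
    have hsplitA : prodAsc a n
        = prodAsc a k * a (k + 1) * a (k + 2) * segAsc a (k + 2) m := by
      have h := prodAsc_add a (k + 2) m
      rw [← hm] at h
      have h2 : prodAsc a (k + 2) = prodAsc a k * a (k + 1) * a (k + 2) := by
        have e1 := prodAsc_succ a (k + 1)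
        have e2 := prodAsc_succ a k
        rw [e2] at e1
        exact e1
      rw [h, h2]
    have hcA : u (k + 2) * prodAsc a k = prodAsc a k * u (k + 2) :=
      commute_prodAsc _ _ (fun l hl1 hl2 =>
        (hC1 l (k + 2) (by omega) (by omega) (by omega) (by omega) (by omega)).symm)
    have hcS : u (k + 1) * segAsc a (k + 2) m = segAsc a (k + 2) m * u (k + 1) :=
      commute_segAsc _ _ _ (fun l hl1 hl2 =>
        (hC1 l (k + 1) (by omega) (by omega) (by omega) (by omega) (by omega)).symm)
    have h5 : u (k + 2) * a (k + 1) * a (k + 2) * u (k + 1) = a (k + 1) * a (k + 2) :=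
      g5 k hk
    have hUu : prodDesc u n * u (k + 2) = u (k + 1) * prodDesc u n :=
      (sUu (k + 1) (by omega) (by omega)).symm
    have hkey2 : u (k + 2) * prodAsc a n * u (k + 1) = prodAsc a n := by
      calc u (k + 2) * prodAsc a n * u (k + 1)
          = u (k + 2) * (prodAsc a k * a (k + 1) * a (k + 2) * segAsc a (k + 2) m)
              * u (k + 1) := by rw [hsplitA]
        _ = (u (k + 2) * prodAsc a k)
              * (a (k + 1) * (a (k + 2) * (segAsc a (k + 2) m * u (k + 1)))) := by
            simp only [mul_assoc]
        _ = (u (k + 2) * prodAsc a k)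
              * (a (k + 1) * (a (k + 2) * (u (k + 1) * segAsc a (k + 2) m))) := by
            rw [← hcS]
        _ = (prodAsc a k * u (k + 2))
              * (a (k + 1) * (a (k + 2) * (u (k + 1) * segAsc a (k + 2) m))) := by
            rw [hcA]
        _ = prodAsc a k * (u (k + 2) * a (k + 1) * a (k + 2) * u (k + 1))
              * segAsc a (k + 2) m := by simp only [mul_assoc]
        _ = prodAsc a k * (a (k + 1) * a (k + 2)) * segAsc a (k + 2) m := by rw [h5]
        _ = prodAsc a k * a (k + 1) * a (k + 2) * segAsc a (k + 2) m := by
            simp only [mul_assoc]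
        _ = prodAsc a n := by rw [← hsplitA]
    calc u (k + 2) * (prodAsc a n * prodDesc u n) * u (k + 2)
        = u (k + 2) * prodAsc a n * (prodDesc u n * u (k + 2)) := by simp only [mul_assoc]
      _ = u (k + 2) * prodAsc a n * (u (k + 1) * prodDesc u n) := by rw [hUu]
      _ = (u (k + 2) * prodAsc a n * u (k + 1)) * prodDesc u n := by simp only [mul_assoc]
      _ = prodAsc a n * prodDesc u n := by rw [hkey2]
  refine ⟨E3 i hi1 hi2, ?_⟩
  rcases eq_or_lt_of_le hi1 with he | hgt
  · -- i = 1 : conjugate the i = 2 case by V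
    obtain rfl : i = 1 := he.symm
    have hVu1 : prodAsc u n * u 1 = u 2 * prodAsc u n := sVu 1 (by omega) (by omega)
    have hE42 : u 2 * (prodAsc a n * prodDesc u n) * u 2 = prodAsc a n * prodDesc u n :=
      E4' 0 (by omega)
    have hrV : (prodAsc a n * prodDesc u n) * prodAsc u n
        = prodAsc u n * (prodAsc a n * prodDesc u n) := by
      rw [hUinv]
      calc (prodAsc a n * (prodAsc u n)⁻¹) * prodAsc u n
          = (prodAsc a n * prodAsc u n) * (prodAsc u n)⁻¹ := by group
        _ = (prodAsc u n * prodAsc a n) * (prodAsc u n)⁻¹ := by rw [hAV]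
        _ = prodAsc u n * (prodAsc a n * (prodAsc u n)⁻¹) := by simp only [mul_assoc]
    have hru2 : (prodAsc a n * prodDesc u n) * u 2
        = (u 2)⁻¹ * (prodAsc a n * prodDesc u n) := by
      calc (prodAsc a n * prodDesc u n) * u 2
          = (u 2)⁻¹ * (u 2 * (prodAsc a n * prodDesc u n) * u 2) := by group
        _ = (u 2)⁻¹ * (prodAsc a n * prodDesc u n) := by rw [hE42]
    have hrVinv : (prodAsc a n * prodDesc u n) * (prodAsc u n)⁻¹
        = (prodAsc u n)⁻¹ * (prodAsc a n * prodDesc u n) := by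
      calc (prodAsc a n * prodDesc u n) * (prodAsc u n)⁻¹
          = (prodAsc u n)⁻¹ * (prodAsc u n * (prodAsc a n * prodDesc u n))
              * (prodAsc u n)⁻¹ := by group
        _ = (prodAsc u n)⁻¹ * ((prodAsc a n * prodDesc u n) * prodAsc u n)
              * (prodAsc u n)⁻¹ := by rw [← hrV]
        _ = (prodAsc u n)⁻¹ * (prodAsc a n * prodDesc u n) := by group
    have hu1e : u 1 = (prodAsc u n)⁻¹ * (u 2 * prodAsc u n) := by
      calc u 1 = (prodAsc u n)⁻¹ * (prodAsc u n * u 1) := by group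
        _ = (prodAsc u n)⁻¹ * (u 2 * prodAsc u n) := by rw [hVu1]
    have hu1inv : (u 1)⁻¹ = (prodAsc u n)⁻¹ * (u 2)⁻¹ * prodAsc u n := by
      rw [hu1e]; group
    have hru1 : (prodAsc a n * prodDesc u n) * u 1
        = (u 1)⁻¹ * (prodAsc a n * prodDesc u n) := by
      calc (prodAsc a n * prodDesc u n) * u 1
          = (prodAsc a n * prodDesc u n) * ((prodAsc u n)⁻¹ * (u 2 * prodAsc u n)) := by
            rw [hu1e]
        _ = ((prodAsc a n * prodDesc u n) * (prodAsc u n)⁻¹) * u 2 * prodAsc u n := by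
            simp only [mul_assoc]
        _ = ((prodAsc u n)⁻¹ * (prodAsc a n * prodDesc u n)) * u 2 * prodAsc u n := by
            rw [hrVinv]
        _ = (prodAsc u n)⁻¹ * ((prodAsc a n * prodDesc u n) * u 2) * prodAsc u n := by
            simp only [mul_assoc]
        _ = (prodAsc u n)⁻¹ * ((u 2)⁻¹ * (prodAsc a n * prodDesc u n)) * prodAsc u n := by
            rw [hru2]
        _ = ((prodAsc u n)⁻¹ * (u 2)⁻¹) * ((prodAsc a n * prodDesc u n) * prodAsc u n) := by
            simp only [mul_assoc]
        _ = ((prodAsc u n)⁻¹ * (u 2)⁻¹) * (prodAsc u n * (prodAsc a n * prodDesc u n)) := by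
            rw [hrV]
        _ = ((prodAsc u n)⁻¹ * (u 2)⁻¹ * prodAsc u n) * (prodAsc a n * prodDesc u n) := by
            simp only [mul_assoc]
        _ = (u 1)⁻¹ * (prodAsc a n * prodDesc u n) := by rw [← hu1inv]
    calc u 1 * (prodAsc a n * prodDesc u n) * u 1
        = u 1 * ((prodAsc a n * prodDesc u n) * u 1) := by simp only [mul_assoc]
      _ = u 1 * ((u 1)⁻¹ * (prodAsc a n * prodDesc u n)) := by rw [hru1]
      _ = prodAsc a n * prodDesc u n := by group
  · obtain ⟨k, rfl⟩ : ∃ k, i = k + 2 := ⟨i - 2, by omega⟩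
    exact E4' k (by omega)
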